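/- Let H and K be self-adjoint operators on a Hilbert space H, with K affiliated with the abelian von Neumann algebra generated by H. Suppose D₀ is a dense subspace of H contained in the domain of K such that exp(itH)·D₀ ⊆ D₀ for all real t. Then D₀ is a core for K. -/

import Mathlib

open Filter Topology
open scoped InnerProductSpace

variable {H : Type*} [NormedAddCommGroup H] [InnerProductSpace ℂ H] [CompleteSpace H]

/-- A (typically closed, densely defined) operator `A` is affiliated with the von Neumann
algebra `M` if every unitary in the commutant of `M` leaves the domain of `A` invariant and
commutes with `A`. -/
def Affiliated (M : VonNeumannAlgebra H) (A : H →ₗ.[ℂ] H) : Prop :=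
  ∀ u : H →L[ℂ] H, u ∈ M.commutant → u ∈ unitary (H →L[ℂ] H) →
    (∀ ξ : H, ξ ∈ A.domain → u ξ ∈ A.domain) ∧
    ∀ (ξ : A.domain) (h : u ↑ξ ∈ A.domain), A ⟨u ↑ξ, h⟩ = u (A ξ)

/-- Two operators commute strongly if the von Neumann algebras they generate commute;
equivalently, there exist commuting von Neumann algebras `M`, `N` with `A` affiliated
with `M` and `B` affiliated with `N`. -/
def StronglyCommutes (A B : H →ₗ.[ℂ] H) : Prop :=
  ∃ M N : VonNeumannAlgebra H,
    (∀ x ∈ M, ∀ y ∈ N, Commute x y) ∧ Affiliated M A ∧ Affiliated N B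


/-- `U` is the strongly continuous one-parameter unitary group generated by the self-adjoint
operator `A`, i.e. `U t = exp(itA)` (characterized, as in Stone's theorem, by the group law,
strong continuity, and `d/dt U(t)ξ |_{t=0} = i A ξ` for `ξ ∈ D(A)`). -/
def IsUnitaryGroupOf (U : ℝ → H →L[ℂ] H) (A : H →ₗ.[ℂ] H) : Prop :=
  (∀ t, U t ∈ unitary (H →L[ℂ] H)) ∧ U 0 = 1 ∧ (∀ s t, U (s + t) = U s * U t) ∧
  (∀ ξ : H, Continuous fun t => U t ξ) ∧
  ∀ ξ : A.domain, HasDerivAt (fun t => U t ↑ξ) (Complex.I • A ξ) 0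

section Helpers

private lemma myApplyCongr {f g : H →ₗ.[ℂ] H} (h : f = g) {x : H}
    (hx : x ∈ f.domain) (hx' : x ∈ g.domain) : f ⟨x, hx⟩ = g ⟨x, hx'⟩ := by
  subst h; rfl

private lemma myNormLe {a b : ℝ} (ha : 0 ≤ a) (hb : 0 ≤ b) (h : a ^ 2 ≤ b ^ 2) : a ≤ b := by
  nlinarith

private lemma myCauchyDom {X : Type*} [PseudoMetricSpace X] {s w : ℕ → X}
    (hs : CauchySeq s) (h : ∀ n m, dist (w n) (w m) ≤ dist (s n) (s m)) : CauchySeq w := by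
  rw [Metric.cauchySeq_iff] at hs ⊢
  intro ε hε
  obtain ⟨N, hN⟩ := hs ε hε
  exact ⟨N, fun n hn m hm => lt_of_le_of_lt (h n m) (hN n hn m hm)⟩

private lemma myAdjointClosed (T : H →ₗ.[ℂ] H) (hT : Dense (T.domain : Set H)) :
    IsClosed (T.adjoint.graph : Set (H × H)) := by
  apply IsSeqClosed.isClosed
  intro x q hx hq
  have hq1 : Tendsto (fun n => (x n).1) atTop (𝓝 q.1) :=
    ((continuous_fst.tendsto q).comp hq)
  have hq2 : Tendsto (fun n => (x n).2) atTop (𝓝 q.2) :=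
    ((continuous_snd.tendsto q).comp hq)
  have key : ∀ φ : T.domain, ⟪q.2, (φ : H)⟫_ℂ = ⟪q.1, T φ⟫_ℂ := by
    intro φ
    have hn : ∀ n, ⟪(x n).2, (φ : H)⟫_ℂ = ⟪(x n).1, T φ⟫_ℂ := by
      intro n
      obtain ⟨y, hy1, hy2⟩ := (T.adjoint.mem_graph_iff).1 (hx n)
      rw [← hy2, ← hy1]
      exact LinearPMap.adjoint_isFormalAdjoint hT y φ
    have l1 : Tendsto (fun n => ⟪(x n).2, (φ : H)⟫_ℂ) atTop (𝓝 ⟪q.2, (φ : H)⟫_ℂ) :=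
      hq2.inner tendsto_const_nhds
    have l2 : Tendsto (fun n => ⟪(x n).2, (φ : H)⟫_ℂ) atTop (𝓝 ⟪q.1, T φ⟫_ℂ) := by
      simp only [hn]
      exact hq1.inner tendsto_const_nhds
    exact tendsto_nhds_unique l1 l2
  have hmem : q.1 ∈ T.adjoint.domain :=
    LinearPMap.mem_adjoint_domain_of_exists _ ⟨q.2, fun φ => key φ⟩
  refine (T.adjoint.mem_graph_iff).2 ⟨⟨q.1, hmem⟩, rfl, ?_⟩
  exact LinearPMap.adjoint_apply_eq hT _ fun φ => key φ

private lemma myUStar {Hop : H →ₗ.[ℂ] H} {U : ℝ → H →L[ℂ] H} (hU : IsUnitaryGroupOf U Hop)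
    (t : ℝ) : star (U t) = U (-t) := by
  obtain ⟨huni, h0, hadd, -, -⟩ := hU
  have h1 : U t * U (-t) = 1 := by rw [← hadd, add_neg_cancel, h0]
  have h2 : star (U t) * U t = 1 := (Unitary.mem_iff.mp (huni t)).1
  calc star (U t) = star (U t) * (U t * U (-t)) := by rw [h1, mul_one]
    _ = (star (U t) * U t) * U (-t) := by rw [mul_assoc]
    _ = U (-t) := by rw [h2, one_mul]

private lemma myStone (Hop : H →ₗ.[ℂ] H) (hHd : Dense (Hop.domain : Set H))
    (hHsa : Hop.adjoint = Hop) (U : ℝ → H →L[ℂ] H) (hU : IsUnitaryGroupOf U Hop)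
    (u : H →L[ℂ] H) (hcomm : ∀ t, U t * u = u * U t) :
    ∀ ξ : Hop.domain, ∃ h : u ↑ξ ∈ Hop.domain,
      Hop ⟨u ↑ξ, h⟩ = u (Hop ξ) := by
  have hcomm' : ∀ t (x : H), U t (u x) = u (U t x) := by
    intro t x
    have := DFunLike.congr_fun (hcomm t) x
    simpa [ContinuousLinearMap.mul_apply] using this
  have key : ∀ ξ φ : Hop.domain, ⟪u (Hop ξ), (φ : H)⟫_ℂ = ⟪u ↑ξ, Hop φ⟫_ℂ := by
    intro ξ φ
    set c1 : H →L[ℝ] ℂ := (innerSL ℂ (u ↑ξ : H)).restrictScalars ℝ with hc1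
    have hd1 : HasDerivAt (fun t => c1 (U t ↑φ))
        (c1 (Complex.I • Hop φ)) 0 :=
      (c1.hasFDerivAt.comp_hasDerivAt _ (hU.2.2.2.2 φ))
    have hneg : HasDerivAt (fun t : ℝ => U (-t) ↑ξ) (-(Complex.I • Hop ξ)) 0 := by
      have h2 : HasDerivAt (fun t : ℝ => -t) (-1 : ℝ) 0 := hasDerivAt_neg 0
      have := (hU.2.2.2.2 ξ).scomp_of_eq (x := (0:ℝ)) h2 (by norm_num)
      simpa [Function.comp_def] using this
    set c2 : H →L[ℝ] ℂ :=
      ((RCLike.conjCLE (K := ℂ)).toContinuousLinearMap.comp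
        (((innerSL ℂ ((φ : H))).restrictScalars ℝ).comp (u.restrictScalars ℝ))) with hc2
    have hd2 : HasDerivAt (fun t : ℝ => c2 (U (-t) ↑ξ)) (c2 (-(Complex.I • Hop ξ))) 0 :=
      (c2.hasFDerivAt.comp_hasDerivAt _ hneg)
    have hfeq : (fun t => c1 (U t ↑φ)) =
        fun t : ℝ => c2 (U (-t) ↑ξ) := by
      funext t
      have h1 : c2 (U (-t) ↑ξ) = (starRingEnd ℂ) ⟪(φ : H), u (U (-t) ↑ξ)⟫_ℂ := rfl
      rw [h1, inner_conj_symm]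
      show ⟪u (↑ξ : H), U t ↑φ⟫_ℂ = ⟪u (U (-t) ↑ξ), (φ : H)⟫_ℂ
      rw [← hcomm']
      have hadj : U (-t) = ContinuousLinearMap.adjoint (U t) := by
        rw [← ContinuousLinearMap.star_eq_adjoint, myUStar hU t]
      rw [hadj, ContinuousLinearMap.adjoint_inner_left]
    have huniq := (hfeq ▸ hd1).unique hd2
    have hL : c1 (Complex.I • Hop φ) = Complex.I * ⟪u ↑ξ, Hop φ⟫_ℂ := by
      simp [hc1, inner_smul_right]
    have hR : c2 (-(Complex.I • Hop ξ)) = Complex.I * ⟪u (Hop ξ), (φ : H)⟫_ℂ := by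
      have h1 : c2 (-(Complex.I • Hop ξ)) =
          (starRingEnd ℂ) ⟪(φ : H), u (-(Complex.I • Hop ξ))⟫_ℂ := rfl
      rw [h1, map_neg, map_smul, inner_neg_right, inner_smul_right]
      rw [map_neg, map_mul]
      simp [inner_conj_symm]
    rw [hL, hR] at huniq
    exact (mul_left_cancel₀ Complex.I_ne_zero huniq).symm
  intro ξ
  have hmem : u ↑ξ ∈ Hop.adjoint.domain :=
    LinearPMap.mem_adjoint_domain_of_exists _ ⟨u (Hop ξ), fun φ => key ξ φ⟩
  have hdomeq : Hop.adjoint.domain = Hop.domain := congrArg LinearPMap.domain hHsa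
  have hmem' : u ↑ξ ∈ Hop.domain := by
    have h2 := hmem; rw [hdomeq] at h2; exact h2
  refine ⟨hmem', ?_⟩
  have hval : Hop.adjoint ⟨u ↑ξ, hmem⟩ = u (Hop ξ) :=
    LinearPMap.adjoint_apply_eq hHd _ fun φ => key ξ φ
  calc Hop ⟨u ↑ξ, hmem'⟩ = Hop.adjoint ⟨u ↑ξ, hmem⟩ := by
        exact (myApplyCongr hHsa hmem hmem').symm
    _ = u (Hop ξ) := hval

private lemma myDomainIncl (K T : H →ₗ.[ℂ] H) (hTle : T ≤ K)
    (Ksymm : ∀ x y : K.domain, ⟪K x, (y : H)⟫_ℂ = ⟪(x : H), K y⟫_ℂ)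
    (hKcl : K.IsClosed) (hTclosable : T.IsClosable)
    (hdense : ∀ x : H, x ∈ closure {y : H | ∃ η : T.domain,
      K ⟨(η : H), hTle.1 η.2⟩ + Complex.I • (η : H) = y}) :
    K.domain ≤ T.closure.domain := by
  intro ξ hξ
  obtain ⟨sq, hsqR, hsqlim⟩ :=
    mem_closure_iff_seq_limit.mp (hdense (K ⟨ξ, hξ⟩ + Complex.I • ξ))
  choose a ha using hsqR
  set ζ' : ℕ → K.domain := fun n => ⟨(a n : H), hTle.1 (a n).2⟩ with hζ'def
  have hseq : ∀ n, sq n = K (ζ' n) + Complex.I • ((a n : H)) := fun n => (ha n).symm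
  have hnorm2 : ∀ η : K.domain, ‖K η + Complex.I • (η : H)‖ ^ 2
      = ‖K η‖ ^ 2 + ‖(η : H)‖ ^ 2 := by
    intro η
    have him : (⟪K η, (η : H)⟫_ℂ).im = 0 := by
      rw [← Complex.conj_eq_iff_im, inner_conj_symm]
      exact (Ksymm η η).symm
    have hre : RCLike.re ⟪K η, Complex.I • (η : H)⟫_ℂ = 0 := by
      rw [inner_smul_right]
      simp [Complex.mul_re, him]
    rw [norm_add_sq (𝕜 := ℂ), hre]
    simp [norm_smul]
  have hled : ∀ η μ : K.domain,
      dist ((η : H)) ((μ : H)) ≤ dist (K η + Complex.I • (η : H)) (K μ + Complex.I • (μ : H))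
      ∧ dist (K η) (K μ) ≤ dist (K η + Complex.I • (η : H)) (K μ + Complex.I • (μ : H)) := by
    intro η μ
    have hdiff : (K η + Complex.I • (η : H)) - (K μ + Complex.I • (μ : H))
        = K (η - μ) + Complex.I • (((η - μ : K.domain)) : H) := by
      rw [K.map_sub]
      push_cast
      module
    constructor
    · rw [dist_eq_norm, dist_eq_norm, hdiff]
      have hc : (η : H) - (μ : H) = (((η - μ : K.domain)) : H) := by push_cast; ring
      rw [hc]
      refine myNormLe (norm_nonneg _) (norm_nonneg _) ?_
      rw [hnorm2]
      nlinarith [sq_nonneg ‖K (η - μ)‖]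
    · rw [dist_eq_norm, dist_eq_norm, hdiff, ← K.map_sub]
      refine myNormLe (norm_nonneg _) (norm_nonneg _) ?_
      rw [hnorm2]
      nlinarith [sq_nonneg ‖(((η - μ : K.domain)) : H)‖]
  have hsqc' : CauchySeq (fun n => K (ζ' n) + Complex.I • ((a n : H))) := by
    have he : sq = fun n => K (ζ' n) + Complex.I • ((a n : H)) := funext hseq
    rw [← he]
    exact hsqlim.cauchySeq
  have hca : CauchySeq (fun n => ((a n : H))) :=
    myCauchyDom hsqc' (fun n m => (hled (ζ' n) (ζ' m)).1)
  have hcK : CauchySeq (fun n => K (ζ' n)) :=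
    myCauchyDom hsqc' (fun n m => (hled (ζ' n) (ζ' m)).2)
  obtain ⟨ζ, hζ⟩ := cauchySeq_tendsto_of_complete hca
  obtain ⟨v, hv⟩ := cauchySeq_tendsto_of_complete hcK
  have hbv : K ⟨ξ, hξ⟩ + Complex.I • ξ = v + Complex.I • ζ := by
    refine tendsto_nhds_unique hsqlim ?_
    have h2 : Tendsto (fun n => K (ζ' n) + Complex.I • ((a n : H))) atTop
        (𝓝 (v + Complex.I • ζ)) := hv.add (hζ.const_smul Complex.I)
    rwa [show (fun n => K (ζ' n) + Complex.I • ((a n : H))) = sq from (funext hseq).symm]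
      at h2
  have hpair : Tendsto (fun n => (((a n : H)), K (ζ' n))) atTop (𝓝 (ζ, v)) :=
    hζ.prodMk_nhds hv
  have hmemKG : (ζ, v) ∈ K.graph := by
    refine hKcl.mem_of_tendsto hpair (Eventually.of_forall fun n => ?_)
    exact K.mem_graph (ζ' n)
  have hmemTG : (ζ, v) ∈ T.closure.graph := by
    rw [← hTclosable.graph_closure_eq_closure_graph]
    rw [← SetLike.mem_coe, Submodule.topologicalClosure_coe]
    refine mem_closure_of_tendsto hpair (Eventually.of_forall fun n => ?_)
    have h3 : T (a n) = K (ζ' n) := hTle.2 rfl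
    rw [← h3]
    exact T.mem_graph (a n)
  obtain ⟨y, hy1, hy2⟩ := K.mem_graph_iff.mp hmemKG
  have hψval : K (⟨ξ, hξ⟩ - y) = -(Complex.I • (ξ - ζ)) := by
    rw [K.map_sub, hy2]
    have h3 : K ⟨ξ, hξ⟩ - v = Complex.I • ζ - Complex.I • ξ := by
      exact sub_eq_sub_iff_add_eq_add.mpr (hbv.trans (add_comm _ _))
    rw [h3]
    module
  have hcoeψ : ((⟨ξ, hξ⟩ - y : K.domain) : H) = ξ - ζ := by
    push_cast
    rw [hy1]
  have hz : ⟪((⟨ξ, hξ⟩ - y : K.domain) : H), K (⟨ξ, hξ⟩ - y)⟫_ℂ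
      = -(Complex.I * ((‖ξ - ζ‖ : ℂ)) ^ 2) := by
    rw [hψval, inner_neg_right, inner_smul_right, hcoeψ,
      inner_self_eq_norm_sq_to_K (𝕜 := ℂ)]
    norm_cast
  have hconj : (starRingEnd ℂ) ⟪((⟨ξ, hξ⟩ - y : K.domain) : H), K (⟨ξ, hξ⟩ - y)⟫_ℂ
      = ⟪((⟨ξ, hξ⟩ - y : K.domain) : H), K (⟨ξ, hξ⟩ - y)⟫_ℂ := by
    rw [inner_conj_symm]
    exact Ksymm _ _
  have him0 : (⟪((⟨ξ, hξ⟩ - y : K.domain) : H), K (⟨ξ, hξ⟩ - y)⟫_ℂ).im = 0 := by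
    rw [← Complex.conj_eq_iff_im]
    exact hconj
  have hnz : (‖ξ - ζ‖ : ℝ) ^ 2 = 0 := by
    have h5 := congrArg Complex.im hz
    rw [him0] at h5
    simpa [Complex.mul_im, ← Complex.ofReal_pow] using h5.symm
  have hξζ : ξ = ζ := by
    have h0 : ‖ξ - ζ‖ = 0 := by nlinarith [norm_nonneg (ξ - ζ)]
    exact sub_eq_zero.mp (norm_eq_zero.mp h0)
  rw [hξζ]
  obtain ⟨yT, hyT1, -⟩ := T.closure.mem_graph_iff.mp hmemTG
  have hyT1' : (yT : H) = ζ := hyT1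
  exact hyT1' ▸ yT.2

noncomputable def myVN (s : Set (H →L[ℂ] H)) : VonNeumannAlgebra H where
  toStarSubalgebra := StarSubalgebra.centralizer ℂ s
  centralizer_centralizer' := by
    simpa using Set.centralizer_centralizer_centralizer (s ∪ star s)

private lemma myVN_mem {s : Set (H →L[ℂ] H)} {z : H →L[ℂ] H} :
    z ∈ myVN s ↔ ∀ g ∈ s, g * z = z * g ∧ star g * z = z * star g := by
  show z ∈ StarSubalgebra.centralizer ℂ s ↔ _
  exact StarSubalgebra.mem_centralizer_iff ℂ

end Helpers

/-- Proposition 1.A.4: let `Hop`, `K` be self-adjoint operators with `K` affiliated with the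
abelian von Neumann algebra generated by `Hop` (expressed by: `K` is affiliated with every
von Neumann algebra with which `Hop` is affiliated). If `D₀` is a dense subspace contained in
`D(K)` which is invariant under the unitary group `exp(itHop)` for all real `t`, then `D₀` is
a core for `K`. -/
theorem stmt3 (Hop K : H →ₗ.[ℂ] H)
    (hHd : Dense (Hop.domain : Set H)) (hKd : Dense (K.domain : Set H))
    (hHsa : Hop.adjoint = Hop) (hKsa : K.adjoint = K)
    (haff : ∀ M : VonNeumannAlgebra H, Affiliated M Hop → Affiliated M K)
    (U : ℝ → H →L[ℂ] H) (hU : IsUnitaryGroupOf U Hop)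
    (D₀ : Submodule ℂ H) (hD₀d : Dense (D₀ : Set H)) (hD₀K : D₀ ≤ K.domain)
    (hinv : ∀ t : ℝ, ∀ ξ ∈ D₀, U t ξ ∈ D₀) :
    (K.domRestrict D₀).closure = K := by
  classical
  have hUuni := hU.1
  have hUadd := hU.2.2.1
  have hUstar : ∀ t, star (U t) = U (-t) := myUStar hU
  have hUcomm : ∀ s t, U s * U t = U t * U s := fun s t => by
    rw [← hUadd, ← hUadd, add_comm]
  -- the von Neumann algebra generated by the unitary group and affiliation of K
  set NU : VonNeumannAlgebra H := myVN (Set.range U) with hNU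
  set M : VonNeumannAlgebra H := NU.commutant with hM
  have hMcc : M.commutant = NU := VonNeumannAlgebra.commutant_commutant NU
  have hmemNU : ∀ {u : H →L[ℂ] H}, (∀ t, U t * u = u * U t) → u ∈ NU := by
    intro u hu
    rw [hNU, myVN_mem]
    rintro g ⟨t, rfl⟩
    exact ⟨hu t, by rw [hUstar t]; exact hu (-t)⟩
  have hNUcomm : ∀ {u : H →L[ℂ] H}, u ∈ NU → ∀ t, U t * u = u * U t := by
    intro u hu t
    rw [hNU, myVN_mem] at hu
    exact (hu (U t) ⟨t, rfl⟩).1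
  have haffH : Affiliated M Hop := by
    intro u hu _
    rw [hMcc] at hu
    have hs := myStone Hop hHd hHsa U hU u (hNUcomm hu)
    refine ⟨fun x hx => (hs ⟨x, hx⟩).1, fun ξ h => ?_⟩
    obtain ⟨h', hv⟩ := hs ξ
    exact hv
  have hKcomm : ∀ u : H →L[ℂ] H, (∀ t, U t * u = u * U t) →
      u ∈ unitary (H →L[ℂ] H) →
      (∀ x ∈ K.domain, u x ∈ K.domain) ∧
        ∀ (ξ : K.domain) (h : u ↑ξ ∈ K.domain), K ⟨u ↑ξ, h⟩ = u (K ξ) := by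
    intro u hc huni
    exact haff M haffH u (by rw [hMcc]; exact hmemNU hc) huni
  have hKU : ∀ t, (∀ x ∈ K.domain, U t x ∈ K.domain) ∧
      ∀ (ξ : K.domain) (h : U t ↑ξ ∈ K.domain), K ⟨U t ↑ξ, h⟩ = U t (K ξ) :=
    fun t => hKcomm (U t) (fun s => hUcomm s t) (hUuni t)
  -- symmetry of K
  have hdomK : K.adjoint.domain = K.domain := congrArg LinearPMap.domain hKsa
  have Ksymm : ∀ x y : K.domain, ⟪K x, (y : H)⟫_ℂ = ⟪(x : H), K y⟫_ℂ := by
    intro x y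
    obtain ⟨ξ, hξ⟩ := x
    have hξ' : ξ ∈ K.adjoint.domain := by rw [hdomK]; exact hξ
    have h1 := LinearPMap.adjoint_isFormalAdjoint hKd ⟨ξ, hξ'⟩ y
    have h2 : K.adjoint ⟨ξ, hξ'⟩ = K ⟨ξ, hξ⟩ := myApplyCongr hKsa hξ' hξ
    rw [h2] at h1
    exact h1
  -- K is closed
  have hKcl : K.IsClosed := by
    rw [LinearPMap.IsClosed, ← hKsa]
    exact myAdjointClosed K hKd
  -- the range submodule R = (K + i) D₀ and its closure
  set L : ↥D₀ →ₗ[ℂ] H :=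
    (K.toFun ∘ₗ Submodule.inclusion hD₀K) + (Complex.I • D₀.subtype) with hLdef
  have hLapp : ∀ a : ↥D₀, L a = K ⟨(a : H), hD₀K a.2⟩ + Complex.I • (a : H) :=
    fun a => rfl
  set R : Submodule ℂ H := LinearMap.range L with hRdef
  set Rc : Submodule ℂ H := R.topologicalClosure with hRcdef
  set Q : Submodule ℂ H := Rcᗮ with hQdef
  haveI : CompleteSpace Q := (Submodule.isClosed_orthogonal Rc).completeSpace_coe
  set P : H →L[ℂ] H := Q.subtypeL.comp (Q.orthogonalProjectionOnto) with hPdef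
  have hPmem : ∀ x : H, P x ∈ Q := fun x => (Q.orthogonalProjectionOnto x).2
  have hPid : ∀ x ∈ Q, P x = x := by
    intro x hx
    have : Q.orthogonalProjectionOnto x = ⟨x, hx⟩ :=
      Submodule.orthogonalProjectionOnto_mem_subspace_eq_self (⟨x, hx⟩ : Q)
    simp [hPdef, this]
  have hPzero : ∀ x ∈ Qᗮ, P x = 0 := by
    intro x hx
    have : Q.orthogonalProjectionOnto x = 0 :=
      Submodule.orthogonalProjectionOnto_apply_of_mem_orthogonal hx
    simp [hPdef, this]
  have hPP : ∀ x, P (P x) = P x := fun x => hPid _ (hPmem x)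
  have hPadj : ContinuousLinearMap.adjoint P = P := by
    rw [← ContinuousLinearMap.star_eq_adjoint]
    exact isSelfAdjoint_starProjection Q
  have hPinner : ∀ x y : H, ⟪P x, y⟫_ℂ = ⟪x, P y⟫_ℂ := by
    intro x y
    conv_lhs => rw [← hPadj]
    exact ContinuousLinearMap.adjoint_inner_left P y x
  -- invariance of R, Rc, Q, Qᗮ under the group
  have hRinv : ∀ t, ∀ y ∈ R, U t y ∈ R := by
    rintro t y ⟨a, rfl⟩
    refine ⟨⟨U t ↑a, hinv t ↑a a.2⟩, ?_⟩
    rw [hLapp, hLapp]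
    have hmem2 : U t ↑a ∈ K.domain := (hKU t).1 ↑a (hD₀K a.2)
    have hval := (hKU t).2 ⟨↑a, hD₀K a.2⟩ hmem2
    have : K ⟨U t ↑a, hD₀K (hinv t ↑a a.2)⟩ = U t (K ⟨↑a, hD₀K a.2⟩) := hval
    rw [this, map_add, map_smul]
  have hRcinv : ∀ t, ∀ y ∈ Rc, U t y ∈ Rc := by
    intro t y hy
    have hy' : y ∈ closure (R : Set H) := by
      rwa [← Submodule.topologicalClosure_coe]
    have h2 := map_mem_closure (U t).continuous hy'
      (fun z hz => R.le_topologicalClosure (hRinv t z hz))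
    rwa [R.isClosed_topologicalClosure.closure_eq] at h2
  have hQinv : ∀ t, ∀ z ∈ Q, U t z ∈ Q := by
    intro t z hz
    rw [hQdef, Submodule.mem_orthogonal]
    intro v hv
    have hadj : U t = ContinuousLinearMap.adjoint (U (-t)) := by
      rw [← ContinuousLinearMap.star_eq_adjoint, hUstar, neg_neg]
    rw [hadj, ContinuousLinearMap.adjoint_inner_right]
    exact (Submodule.mem_orthogonal Rc z).mp hz _ (hRcinv (-t) v hv)
  have hQpinv : ∀ t, ∀ z ∈ Qᗮ, U t z ∈ Qᗮ := by
    intro t z hz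
    rw [Submodule.mem_orthogonal]
    intro v hv
    have hadj : U t = ContinuousLinearMap.adjoint (U (-t)) := by
      rw [← ContinuousLinearMap.star_eq_adjoint, hUstar, neg_neg]
    rw [hadj, ContinuousLinearMap.adjoint_inner_right]
    exact (Submodule.mem_orthogonal Q z).mp hz _ (hQinv (-t) v hv)
  have hPU : ∀ t x, P (U t x) = U t (P x) := by
    intro t x
    have hx2 : x - P x ∈ Qᗮ := Q.sub_starProjection_mem_orthogonal x
    have hsplit : U t x = U t (P x) + U t (x - P x) := by
      rw [← map_add]; congr 1; abel
    rw [hsplit, map_add, hPid _ (hQinv t _ (hPmem x)), hPzero _ (hQpinv t _ hx2), add_zero]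
  -- the symmetry W = 2P - 1
  set W : H →L[ℂ] H := (2 : ℂ) • P - 1 with hWdef
  have hWapp : ∀ x, W x = (2 : ℂ) • P x - x := by
    intro x
    simp [hWdef, ContinuousLinearMap.sub_apply, ContinuousLinearMap.smul_apply]
  have hWstar : star W = W := by
    have h2 : star ((2 : ℂ) • P) = (2 : ℂ) • P := by
      rw [star_smul, ContinuousLinearMap.star_eq_adjoint, hPadj]
      norm_num
    rw [hWdef, star_sub, h2, star_one]
  have hWW : W * W = 1 := by
    ext x
    have : W (W x) = x := by
      rw [hWapp (W x), hWapp x, map_sub, map_smul, hPP]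
      module
    simpa [ContinuousLinearMap.mul_apply] using this
  have hWuni : W ∈ unitary (H →L[ℂ] H) :=
    Unitary.mem_iff.mpr ⟨by rw [hWstar]; exact hWW, by rw [hWstar]; exact hWW⟩
  have hWcommU : ∀ t, U t * W = W * U t := by
    intro t
    ext x
    simp only [ContinuousLinearMap.mul_apply, hWapp, map_sub, map_smul, hPU]
  have hWK := hKcomm W hWcommU hWuni
  -- P annihilates everything: density of R
  have hP0 : ∀ x : H, P x = 0 := by
    have hs : ∀ ξ ∈ D₀, P ξ = 0 := by
      intro ξ hξ
      have hmemK : ξ ∈ K.domain := hD₀K hξ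
      have hWmem : W ξ ∈ K.domain := hWK.1 ξ hmemK
      have hPrepr : P ξ = (2 : ℂ)⁻¹ • (W ξ + ξ) := by
        rw [hWapp]; module
      have hPmemK : P ξ ∈ K.domain := by
        rw [hPrepr]
        exact Submodule.smul_mem _ _ (Submodule.add_mem _ hWmem hmemK)
      -- K (P ξ) = P (K ξ)
      have hKP : K ⟨P ξ, hPmemK⟩ = P (K ⟨ξ, hmemK⟩) := by
        have he : (⟨P ξ, hPmemK⟩ : K.domain)
            = (2 : ℂ)⁻¹ • ((⟨W ξ, hWmem⟩ : K.domain) + ⟨ξ, hmemK⟩) := by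
          apply Subtype.ext
          simpa using hPrepr
        rw [he, K.map_smul, K.map_add]
        rw [hWK.2 ⟨ξ, hmemK⟩ hWmem]
        rw [hWapp (K ⟨ξ, hmemK⟩)]
        module
      -- orthogonality
      have hmemR : K ⟨ξ, hmemK⟩ + Complex.I • ξ ∈ R := ⟨⟨ξ, hξ⟩, rfl⟩
      have horth : ⟪P ξ, K ⟨ξ, hmemK⟩ + Complex.I • ξ⟫_ℂ = 0 := by
        rw [inner_eq_zero_symm]
        exact (Submodule.mem_orthogonal Rc (P ξ)).mp (hPmem ξ) _
          (R.le_topologicalClosure hmemR)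
      have hreal : ⟪P ξ, K ⟨ξ, hmemK⟩⟫_ℂ
          = ⟪P ξ, K ⟨P ξ, hPmemK⟩⟫_ℂ := by
        conv_lhs => rw [← hPP ξ]
        rw [hPinner, ← hKP]
      have him : (⟪P ξ, K ⟨ξ, hmemK⟩⟫_ℂ).im = 0 := by
        rw [hreal, ← Complex.conj_eq_iff_im]
        rw [inner_conj_symm]
        exact Ksymm ⟨P ξ, hPmemK⟩ ⟨P ξ, hPmemK⟩
      have hb : ⟪P ξ, ξ⟫_ℂ = ((‖P ξ‖ : ℂ)) ^ 2 := by
        conv_lhs => rw [← hPP ξ]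
        rw [hPinner]
        exact inner_self_eq_norm_sq_to_K (𝕜 := ℂ) (P ξ)
      rw [inner_add_right, inner_smul_right, hb] at horth
      have him2 := congrArg Complex.im horth
      simp [Complex.add_im, Complex.mul_im, him, ← Complex.ofReal_pow] at him2
      exact him2
    intro x
    have hcl : IsClosed {y : H | P y = 0} := isClosed_eq P.continuous continuous_const
    exact hcl.closure_subset_iff.mpr (fun y hy => hs y hy) (hD₀d x)
  have hRdense : ∀ x : H, x ∈ closure (R : Set H) := by
    have hQbot : Q = ⊥ := by
      rw [Submodule.eq_bot_iff]
      intro z hz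
      rw [← hPid z hz]
      exact hP0 z
    have hRcTop : Rc = ⊤ := by
      have := hQbot
      rw [hQdef, Submodule.orthogonal_eq_bot_iff] at this
      exact this
    intro x
    rw [← Submodule.topologicalClosure_coe]
    rw [← hRcdef]  -- maybe unnecessary
    rw [hRcTop]
    trivial
  -- closure arguments
  set T : H →ₗ.[ℂ] H := K.domRestrict D₀ with hTdef
  have hTle : T ≤ K := LinearPMap.domRestrict_le
  have hKclosable : K.IsClosable := hKcl.isClosable
  have hTclosable : T.IsClosable := hKclosable.leIsClosable hTle
  have hKcleq : K.closure = K := by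
    apply LinearPMap.eq_of_eq_graph
    rw [← hKclosable.graph_closure_eq_closure_graph]
    exact le_antisymm (Submodule.topologicalClosure_minimal _ le_rfl hKcl)
      K.graph.le_topologicalClosure
  have hTcleK : T.closure ≤ K := by
    rw [← hKcleq]
    exact hKclosable.closure_mono hTle
  -- main domain inclusion
  have hdom : K.domain ≤ T.closure.domain := by
    refine myDomainIncl K T hTle Ksymm hKcl hTclosable ?_
    intro x
    refine closure_mono ?_ (hRdense x)
    rintro y ⟨b, rfl⟩
    refine ⟨⟨(b : H), ?_⟩, ?_⟩
    · rw [hTdef, LinearPMap.domRestrict_domain]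
      exact ⟨b.2, hD₀K b.2⟩
    · rw [hLapp]
  exact LinearPMap.eq_of_le_of_domain_eq hTcleK (le_antisymm hTcleK.1 hdom)
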